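/- On ℝ⁵ consider the C^∞ vector fields g₁(x) = (−1/2, 0, 1, 0, 0), g₂(x) = (0, −1/2, 0, 1, 0), g₃(x) = (−x₂/2, x₁/2, 0, 0, 1). Let x : ℝ → ℝ⁵ be differentiable and u₁, u₂, u₃ : ℝ → ℝ satisfy x'(t) = u₁(t)·g₁(x(t)) + u₂(t)·g₂(x(t)) + u₃(t)·g₃(x(t)) for all t. Then for every t: (x₅)'(t) = u₃(t), (2x₁ + x₃)'(t) = −u₃(t)·x₂(t), and (2x₂ + x₄)'(t) = u₃(t)·x₁(t); consequently, at every t with u₃(t) ≠ 0, x₁(t) = (2x₂ + x₄)'(t) / (x₅)'(t) and x₂(t) = −(2x₁ + x₃)'(t) / (x₅)'(t). -/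

import Mathlib

/-- First input vector field of the three-input, five-state example. -/
noncomputable def exG1 (_x : Fin 5 → ℝ) : Fin 5 → ℝ := ![-(1/2), 0, 1, 0, 0]

/-- Second input vector field of the three-input, five-state example. -/
noncomputable def exG2 (_x : Fin 5 → ℝ) : Fin 5 → ℝ := ![0, -(1/2), 0, 1, 0]

/-- Third input vector field of the three-input, five-state example. -/
noncomputable def exG3 (x : Fin 5 → ℝ) : Fin 5 → ℝ := ![-(x 1)/2, x 0/2, 0, 0, 1]

theorem example_states_from_flat_outputs
    (x : ℝ → (Fin 5 → ℝ)) (u₁ u₂ u₃ : ℝ → ℝ)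
    (hx : Differentiable ℝ x)
    (hsys : ∀ t, deriv x t = u₁ t • exG1 (x t) + u₂ t • exG2 (x t) + u₃ t • exG3 (x t)) :
    ∀ t : ℝ,
      deriv (fun s => x s 4) t = u₃ t ∧
      deriv (fun s => 2 * x s 0 + x s 2) t = -(u₃ t) * x t 1 ∧
      deriv (fun s => 2 * x s 1 + x s 3) t = u₃ t * x t 0 ∧
      (u₃ t ≠ 0 →
        x t 0 = deriv (fun s => 2 * x s 1 + x s 3) t / deriv (fun s => x s 4) t ∧
        x t 1 = -(deriv (fun s => 2 * x s 0 + x s 2) t / deriv (fun s => x s 4) t)) := by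
  intro t
  have hcomp : ∀ i : Fin 5, HasDerivAt (fun s => x s i) (deriv x t i) t := by
    intro i
    exact ((ContinuousLinearMap.proj (R := ℝ) (φ := fun _ : Fin 5 => ℝ) i).hasFDerivAt).comp_hasDerivAt t (hx t).hasDerivAt
  have hd : ∀ i : Fin 5, deriv (fun s => x s i) t = deriv x t i :=
    fun i => (hcomp i).deriv
  have hval : ∀ i : Fin 5, deriv x t i =
      u₁ t * exG1 (x t) i + u₂ t * exG2 (x t) i + u₃ t * exG3 (x t) i := by
    intro i; rw [hsys t]; simp
  have h4 : deriv (fun s => x s 4) t = u₃ t := by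
    rw [hd 4, hval 4]; simp [exG1, exG2, exG3]
  have h02 : deriv (fun s => 2 * x s 0 + x s 2) t = -(u₃ t) * x t 1 := by
    have : HasDerivAt (fun s => 2 * x s 0 + x s 2) (2 * deriv x t 0 + deriv x t 2) t := ((hcomp 0).const_mul 2).add (hcomp 2)
    rw [this.deriv, hval 0, hval 2]
    simp [exG1, exG2, exG3]; ring
  have h13 : deriv (fun s => 2 * x s 1 + x s 3) t = u₃ t * x t 0 := by
    have : HasDerivAt (fun s => 2 * x s 1 + x s 3) (2 * deriv x t 1 + deriv x t 3) t := ((hcomp 1).const_mul 2).add (hcomp 3)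
    rw [this.deriv, hval 1, hval 3]
    simp [exG1, exG2, exG3]; ring
  refine ⟨h4, h02, h13, fun hu => ⟨?_, ?_⟩⟩
  · rw [h13, h4]; field_simp
  · rw [h02, h4]; field_simp
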